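/- arXiv:1204.0305 — 6 statements merged into one kernel-verified Lean document; each statement's English description precedes it below -/
import Mathlib

section
/- Let ε > 0 and A, B : [-ε, ε] → ℝ continuous with A(0) > 0. If h : (0, ε] → ℝ solves h'(y) = -h(y)/(A(y)y²) + B(y) and lim_{y→0+} h(y) = c for some real c ≠ 0, then a contradiction follows; i.e., every solution on (0,ε] with a finite limit at 0 must have limit 0. -/
open MeasureTheory Filter

/-- Auxiliary version with `0 < c`. -/
lemma stmt4_aux (ε : ℝ) (hε : 0 < ε) (A B : ℝ → ℝ)
    (hA : ContinuousOn A (Set.Icc (-ε) ε)) (hB : ContinuousOn B (Set.Icc (-ε) ε))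
    (hA0 : 0 < A 0) (h : ℝ → ℝ)
    (hode : ∀ y ∈ Set.Ioc 0 ε, HasDerivAt h (-(h y) / (A y * y ^ 2) + B y) y)
    (c : ℝ) (hc : 0 < c)
    (hlim : Tendsto h (nhdsWithin 0 (Set.Ioi 0)) (nhds c)) :
    False := by
  -- bound on B
  obtain ⟨M₀, hM₀⟩ := IsCompact.exists_bound_of_continuousOn isCompact_Icc hB
  obtain ⟨M, hMdef⟩ : ∃ m : ℝ, m = max M₀ 0 := ⟨_, rfl⟩
  have hM : ∀ y ∈ Set.Icc (-ε) ε, |B y| ≤ M := by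
    intro y hy
    have := hM₀ y hy
    rw [Real.norm_eq_abs] at this
    rw [hMdef]
    exact this.trans (le_max_left _ _)
  have hM0 : 0 ≤ M := hMdef ▸ le_max_right _ _
  -- bounds on A near 0
  have hA0mem : (0 : ℝ) ∈ Set.Icc (-ε) ε := ⟨by linarith, le_of_lt hε⟩
  have hAcont : Filter.Tendsto A (nhdsWithin 0 (Set.Icc (-ε) ε)) (nhds (A 0)) :=
    hA 0 hA0mem
  have eA : ∀ᶠ y in nhdsWithin 0 (Set.Icc (-ε) ε),
      A y ∈ Set.Ioo (A 0 / 2) (2 * A 0) :=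
    hAcont (Ioo_mem_nhds (by linarith) (by linarith))
  have hsubIcc : Set.Ioc (0 : ℝ) ε ⊆ Set.Icc (-ε) ε := fun x hx =>
    ⟨by linarith [hx.1], hx.2⟩
  have eA' : ∀ᶠ y in nhdsWithin 0 (Set.Ioi 0),
      A y ∈ Set.Ioo (A 0 / 2) (2 * A 0) := by
    rw [← nhdsWithin_Ioc_eq_nhdsGT hε]
    exact eA.filter_mono (nhdsWithin_mono _ hsubIcc)
  -- bounds on h near 0
  have eh : ∀ᶠ y in nhdsWithin 0 (Set.Ioi 0), h y ∈ Set.Ioo (c / 2) (2 * c) :=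
    hlim (Ioo_mem_nhds (by linarith) (by linarith))
  -- extract δ
  obtain ⟨u, hu, hsub⟩ := mem_nhdsGT_iff_exists_Ioc_subset.mp (eA'.and eh)
  have hu0 : (0 : ℝ) < u := hu
  obtain ⟨δ, hδdef⟩ : ∃ d : ℝ, d = min u ε := ⟨_, rfl⟩
  have hδ0 : 0 < δ := hδdef ▸ lt_min hu0 hε
  have hδε : δ ≤ ε := hδdef ▸ min_le_right _ _
  have hδu : δ ≤ u := hδdef ▸ min_le_left _ _
  have hprop : ∀ y ∈ Set.Ioc (0 : ℝ) δ,
      (A y ∈ Set.Ioo (A 0 / 2) (2 * A 0)) ∧ h y ∈ Set.Ioo (c / 2) (2 * c) :=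
    fun y hy => hsub ⟨hy.1, hy.2.trans hδu⟩
  obtain ⟨K, hKdef⟩ : ∃ k : ℝ, k = c / (4 * A 0) := ⟨_, rfl⟩
  have hK : 0 < K := hKdef ▸ div_pos hc (by linarith)
  -- the comparison function φ
  obtain ⟨φ, hφdef⟩ : ∃ f : ℝ → ℝ, f = fun y => M * y - h y + K * y⁻¹ := ⟨_, rfl⟩
  -- derivative of φ on (0, δ]
  have hφderiv : ∀ y ∈ Set.Ioc (0 : ℝ) δ,
      HasDerivAt φ (M - (-(h y) / (A y * y ^ 2) + B y) - K * (y ^ 2)⁻¹) y := by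
    intro y hy
    have hy0 : y ≠ 0 := ne_of_gt hy.1
    have h1 : HasDerivAt (fun y : ℝ => M * y) M y := by
      simpa using (hasDerivAt_id y).const_mul M
    have h2 := hode y ⟨hy.1, hy.2.trans hδε⟩
    have h3 : HasDerivAt (fun y : ℝ => K * y⁻¹) (K * (-(y ^ 2)⁻¹)) y :=
      (hasDerivAt_inv hy0).const_mul K
    rw [hφdef]
    have := (h1.sub h2).add h3
    exact this.congr_deriv (by ring)
  have hφnonneg : ∀ y ∈ Set.Ioc (0 : ℝ) δ,
      0 ≤ M - (-(h y) / (A y * y ^ 2) + B y) - K * (y ^ 2)⁻¹ := by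
    intro y hy
    obtain ⟨hAy, hhy⟩ := hprop y hy
    have hy0 : 0 < y := hy.1
    have hy2 : 0 < y ^ 2 := by positivity
    have hAy0 : 0 < A y := lt_trans (by linarith) hAy.1
    have hd : 0 < A y * y ^ 2 := mul_pos hAy0 hy2
    have hBy : B y ≤ M := le_trans (le_abs_self _) (hM y (hsubIcc ⟨hy0, hy.2.trans hδε⟩))
    -- key: K / y² ≤ h y / (A y * y²)
    have hKA : K * A y ≤ h y := by
      have : K * A y ≤ K * (2 * A 0) := by
        have := hAy.2.le
        nlinarith
      have h2 : K * (2 * A 0) = c / 2 := by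
        rw [hKdef]; field_simp; ring
      linarith [hhy.1]
    have hkey : K * (y ^ 2)⁻¹ ≤ h y / (A y * y ^ 2) := by
      rw [← div_eq_mul_inv]
      have heq : K / y ^ 2 = K * A y / (A y * y ^ 2) := by
        field_simp
      rw [heq]
      exact div_le_div_of_nonneg_right hKA hd.le
    have hneg : -(h y) / (A y * y ^ 2) = -(h y / (A y * y ^ 2)) := by ring
    rw [hneg]
    linarith
  -- φ is monotone on [a, δ] for any 0 < a ≤ δ
  have hmono : ∀ a : ℝ, 0 < a → a ≤ δ → φ a ≤ φ δ := by
    intro a ha haδ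
    have hIcc : Set.Icc a δ ⊆ Set.Ioc (0 : ℝ) δ := fun x hx => ⟨lt_of_lt_of_le ha hx.1, hx.2⟩
    have hcont : ContinuousOn φ (Set.Icc a δ) := fun x hx =>
      ((hφderiv x (hIcc hx)).continuousAt).continuousWithinAt
    have hdiff : DifferentiableOn ℝ φ (interior (Set.Icc a δ)) := by
      rw [interior_Icc]
      exact fun x hx =>
        ((hφderiv x (hIcc ⟨hx.1.le, hx.2.le⟩)).differentiableAt).differentiableWithinAt
    have hd' : ∀ x ∈ interior (Set.Icc a δ), 0 ≤ deriv φ x := by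
      rw [interior_Icc]
      intro x hx
      have hmem := hIcc ⟨hx.1.le, hx.2.le⟩
      rw [(hφderiv x hmem).deriv]
      exact hφnonneg x hmem
    exact monotoneOn_of_deriv_nonneg (convex_Icc a δ) hcont hdiff hd'
      ⟨le_refl a, haδ⟩ ⟨haδ, le_refl δ⟩ haδ
  -- from monotonicity, K / a is bounded
  obtain ⟨C, hCdef⟩ : ∃ x : ℝ, x = M * δ + K / δ + 2 * c := ⟨_, rfl⟩
  have hC0 : 0 < C := by
    rw [hCdef]
    have h1 : 0 < K / δ := div_pos hK hδ0
    have h2 : 0 ≤ M * δ := mul_nonneg hM0 hδ0.le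
    linarith
  have hbound : ∀ a : ℝ, 0 < a → a ≤ δ → K / a ≤ C := by
    intro a ha haδ
    have h1 := hmono a ha haδ
    have hha := (hprop a ⟨ha, haδ⟩).2
    have hhδ := (hprop δ ⟨hδ0, le_refl δ⟩).2
    have hMa : 0 ≤ M * a := mul_nonneg hM0 ha.le
    rw [hφdef] at h1
    simp only [] at h1
    rw [div_eq_mul_inv, hCdef]
    have hKδ : K * δ⁻¹ = K / δ := (div_eq_mul_inv K δ).symm
    nlinarith [hha.2, hhδ.1]
  -- contradiction: choose a tiny
  obtain ⟨a, hadef⟩ : ∃ x : ℝ, x = min δ (K / (2 * C)) := ⟨_, rfl⟩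
  have ha0 : 0 < a := hadef ▸ lt_min hδ0 (div_pos hK (by linarith))
  have haδ : a ≤ δ := hadef ▸ min_le_left _ _
  have ha2 : a ≤ K / (2 * C) := hadef ▸ min_le_right _ _
  have : 2 * C ≤ K / a := by
    rw [le_div_iff₀ ha0]
    calc 2 * C * a ≤ 2 * C * (K / (2 * C)) := by
          apply mul_le_mul_of_nonneg_left ha2 (by linarith)
      _ = K := by field_simp
  linarith [hbound a ha0 haδ]

/-- No solution `h` of `h'(y) = -h(y)/(A(y)y²) + B(y)` on `(0, ε]` can converge, as `y → 0+`,
to a nonzero finite limit `c`. -/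
theorem stmt4 (ε : ℝ) (hε : 0 < ε) (A B : ℝ → ℝ)
    (hA : ContinuousOn A (Set.Icc (-ε) ε)) (hB : ContinuousOn B (Set.Icc (-ε) ε))
    (hA0 : 0 < A 0) (h : ℝ → ℝ)
    (hode : ∀ y ∈ Set.Ioc 0 ε, HasDerivAt h (-(h y) / (A y * y ^ 2) + B y) y)
    (c : ℝ) (hc : c ≠ 0)
    (hlim : Tendsto h (nhdsWithin 0 (Set.Ioi 0)) (nhds c)) :
    False := by
  rcases hc.lt_or_gt with hneg | hpos
  · -- c < 0 : apply the aux lemma to -h, -B, -c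
    apply stmt4_aux ε hε A (fun y => -B y) hA hB.neg hA0 (fun y => -h y) ?_ (-c)
      (by linarith) hlim.neg
    intro y hy
    have := (hode y hy).neg
    exact this.congr_deriv (by ring)
  · exact stmt4_aux ε hε A B hA hB hA0 h hode c hpos hlim
end

section
/- Let ε > 0 and A, B : [-ε, 0] → ℝ continuous with A(0) > 0. Then every solution h of h'(y) = -h(y)/(A(y)y²) + B(y) on [-ε, 0) satisfies lim_{y→0-} h(y) = 0. -/
open MeasureTheory Filter

/-- One-sided barrier lemma: under upper bounds on `A` and `B` near `0⁻`, every solution of the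
ODE eventually stays below any positive level `r`. -/
lemma stmt5_aux (ε δ₀ M C : ℝ) (hδ₀ : 0 < δ₀) (hδε : δ₀ ≤ ε) (hM : 0 < M) (hC : 0 ≤ C)
    (A B h : ℝ → ℝ)
    (hA : ∀ y ∈ Set.Icc (-δ₀) (0:ℝ), 0 < A y ∧ A y ≤ M)
    (hBC : ∀ y ∈ Set.Icc (-δ₀) (0:ℝ), B y ≤ C)
    (hode : ∀ y ∈ Set.Ico (-ε) (0:ℝ), HasDerivAt h (-(h y) / (A y * y ^ 2) + B y) y)
    (r : ℝ) (hr : 0 < r) :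
    ∀ᶠ y in nhdsWithin 0 (Set.Iio 0), h y < r := by
  have hcont : ∀ y ∈ Set.Ico (-ε) (0:ℝ), ContinuousAt h y :=
    fun y hy => (hode y hy).continuousAt
  -- choose δ small enough
  set δ : ℝ := min δ₀ (Real.sqrt (r / (2 * M * (C + 1)))) with hδdef
  have hδpos : 0 < δ := by
    apply lt_min hδ₀
    apply Real.sqrt_pos.2
    positivity
  have hδle : δ ≤ δ₀ := min_le_left _ _
  have hδsq : δ ^ 2 ≤ r / (2 * M * (C + 1)) := by
    have h1 : δ ≤ Real.sqrt (r / (2 * M * (C + 1))) := min_le_right _ _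
    have h2 : δ ^ 2 ≤ Real.sqrt (r / (2 * M * (C + 1))) ^ 2 :=
      pow_le_pow_left₀ hδpos.le h1 2
    rwa [Real.sq_sqrt (by positivity)] at h2
  have hδ2 : 2 * M * C * δ ^ 2 ≤ r := by
    rw [le_div_iff₀ (by positivity : (0:ℝ) < 2 * M * (C + 1))] at hδsq
    nlinarith [sq_nonneg δ, hM.le]
  set c : ℝ := r / (2 * M) with hcdef
  have hcpos : 0 < c := by positivity
  -- key derivative bound
  have hkey : ∀ y ∈ Set.Ico (-δ) (0:ℝ), r ≤ h y →
      -(h y) / (A y * y ^ 2) + B y ≤ -c / y ^ 2 := by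
    intro y hy hhy
    have hyneg : y < 0 := hy.2
    have hyne : y ≠ 0 := ne_of_lt hyneg
    have hy2 : 0 < y ^ 2 := by positivity
    have hyIcc : y ∈ Set.Icc (-δ₀) 0 := ⟨le_trans (neg_le_neg hδle) hy.1, hyneg.le⟩
    obtain ⟨hApos, hAle⟩ := hA y hyIcc
    have hP : 0 < A y * y ^ 2 := by positivity
    have hQ : 0 < M * y ^ 2 := by positivity
    have h1 : -(h y) / (A y * y ^ 2) ≤ -(r / (M * y ^ 2)) := by
      rw [neg_div, neg_le_neg_iff, div_le_div_iff₀ hQ hP]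
      have e1 : r * (A y * y ^ 2) ≤ h y * (A y * y ^ 2) :=
        mul_le_mul_of_nonneg_right hhy hP.le
      have e2 : h y * (A y * y ^ 2) ≤ h y * (M * y ^ 2) :=
        mul_le_mul_of_nonneg_left (mul_le_mul_of_nonneg_right hAle hy2.le)
          (le_trans hr.le hhy)
      linarith
    have h2 : B y ≤ C := hBC y hyIcc
    have hysq : y ^ 2 ≤ δ ^ 2 :=
      sq_le_sq' hy.1 (by linarith [hy.2, hδpos])
    have h3 : C ≤ r / (2 * M * y ^ 2) := by
      rw [le_div_iff₀ (by positivity)]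
      nlinarith
    have h4 : -c / y ^ 2 = -(r / (M * y ^ 2)) + r / (2 * M * y ^ 2) := by
      rw [hcdef]
      field_simp
      ring
    rw [h4]
    linarith
  by_cases hex : ∃ y₁ ∈ Set.Ioo (-δ) (0:ℝ), h y₁ < r
  · -- persistence
    obtain ⟨y₁, hy₁mem, hy₁⟩ := hex
    have hy₁ε : -ε < y₁ := lt_of_lt_of_le (lt_of_le_of_lt (neg_le_neg (hδle.trans hδε)) hy₁mem.1) le_rfl
    have hper : ∀ y ∈ Set.Ico y₁ (0:ℝ), h y < r := by
      by_contra hcon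
      push_neg at hcon
      obtain ⟨T, hTdef⟩ : ∃ T : Set ℝ, T = {y | y ∈ Set.Ico y₁ (0:ℝ) ∧ r ≤ h y} := ⟨_, rfl⟩
      obtain ⟨t, htmem, htr⟩ := hcon
      have htT : t ∈ T := by rw [hTdef]; exact ⟨htmem, htr⟩
      have hTne : T.Nonempty := ⟨t, htT⟩
      have hTbdd : BddBelow T := ⟨y₁, fun y hy => by rw [hTdef] at hy; exact hy.1.1⟩
      obtain ⟨y₂, hy₂def⟩ : ∃ y₂, y₂ = sInf T := ⟨_, rfl⟩
      have hy₁y₂ : y₁ ≤ y₂ := by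
        rw [hy₂def]
        exact le_csInf hTne fun y hy => by rw [hTdef] at hy; exact hy.1.1
      have hy₂0 : y₂ < 0 := by
        have := csInf_le hTbdd htT
        rw [← hy₂def] at this
        exact lt_of_le_of_lt this htmem.2
      have hy₂Ico : y₂ ∈ Set.Ico (-ε) (0:ℝ) := ⟨le_trans hy₁ε.le hy₁y₂, hy₂0⟩
      have hy₂cont : ContinuousAt h y₂ := hcont y₂ hy₂Ico
      obtain ⟨u, hu_anti, hu_tend, hu_mem⟩ := exists_seq_tendsto_sInf hTne hTbdd
      rw [← hy₂def] at hu_tend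
      have hhy₂ : r ≤ h y₂ :=
        ge_of_tendsto (hy₂cont.tendsto.comp hu_tend)
          (Eventually.of_forall fun n => by
            have := hu_mem n
            rw [hTdef] at this
            exact this.2)
      have hy₁lt : y₁ < y₂ := lt_of_le_of_ne hy₁y₂ (by rintro rfl; linarith)
      have hbelow : ∀ y ∈ Set.Ico y₁ y₂, h y < r := by
        intro y hy
        by_contra hge
        push_neg at hge
        have hyT : y ∈ T := by rw [hTdef]; exact ⟨⟨hy.1, lt_trans hy.2 hy₂0⟩, hge⟩
        have := csInf_le hTbdd hyT
        rw [← hy₂def] at this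
        exact absurd this (not_le.2 hy.2)
      have hy₂δ : y₂ ∈ Set.Ico (-δ) (0:ℝ) := ⟨le_trans hy₁mem.1.le hy₁y₂, hy₂0⟩
      have hd := hode y₂ hy₂Ico
      have hdneg : -(h y₂) / (A y₂ * y₂ ^ 2) + B y₂ < 0 :=
        lt_of_le_of_lt (hkey y₂ hy₂δ hhy₂)
          (div_neg_of_neg_of_pos (by linarith : -c < 0) (by nlinarith : (0:ℝ) < y₂ ^ 2))
      have hslope := hasDerivAt_iff_tendsto_slope.mp hd
      have hslope' : Tendsto (slope h y₂) (nhdsWithin y₂ (Set.Iio y₂))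
          (nhds (-(h y₂) / (A y₂ * y₂ ^ 2) + B y₂)) :=
        hslope.mono_left (nhdsWithin_mono _ fun x hx => ne_of_lt hx)
      have hev : ∀ᶠ y in nhdsWithin y₂ (Set.Iio y₂), 0 ≤ slope h y₂ y := by
        filter_upwards [Ioo_mem_nhdsLT hy₁lt] with y hy
        have h1 : h y < r := hbelow y ⟨hy.1.le, hy.2⟩
        have h2 : h y - h y₂ ≤ 0 := by linarith
        have h3 : y - y₂ < 0 := by linarith [hy.2]
        rw [slope_def_field]
        exact div_nonneg_iff.mpr (Or.inr ⟨h2, h3.le⟩)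
      have : (0:ℝ) ≤ -(h y₂) / (A y₂ * y₂ ^ 2) + B y₂ :=
        ge_of_tendsto hslope' hev
      linarith
    filter_upwards [Ioo_mem_nhdsLT hy₁mem.2] with y hy
    exact hper y ⟨hy.1.le, hy.2⟩
  · -- existence: h ≥ r on the whole interval leads to a contradiction
    exfalso
    push_neg at hex
    set φ : ℝ → ℝ := fun y => h y - c * y⁻¹ with hφdef
    have hmemε : ∀ y ∈ Set.Ico (-δ) (0:ℝ), y ∈ Set.Ico (-ε) (0:ℝ) := by
      intro y hy
      exact ⟨le_trans (neg_le_neg (hδle.trans hδε)) hy.1, hy.2⟩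
    have hφcont : ContinuousOn φ (Set.Ico (-δ) 0) := by
      intro y hy
      have h1 : ContinuousAt (fun z : ℝ => h z - c * z⁻¹) y :=
        (hcont y (hmemε y hy)).sub
          (continuousAt_const.mul (continuousAt_inv₀ (ne_of_lt hy.2)))
      exact h1.continuousWithinAt
    have hφderiv : ∀ y ∈ Set.Ioo (-δ) (0:ℝ),
        HasDerivAt φ ((-(h y) / (A y * y ^ 2) + B y) + c * (y ^ 2)⁻¹) y := by
      intro y hy
      have h1 := hode y (hmemε y ⟨hy.1.le, hy.2⟩)
      have h2 := (hasDerivAt_inv (ne_of_lt hy.2)).const_mul c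
      have := h1.sub h2
      exact this.congr_deriv (by ring)
    have hφanti : AntitoneOn φ (Set.Ico (-δ) 0) := by
      apply antitoneOn_of_deriv_nonpos (convex_Ico _ _) hφcont
      · intro y hy
        rw [interior_Ico] at hy
        exact (hφderiv y hy).differentiableAt.differentiableWithinAt
      · intro y hy
        rw [interior_Ico] at hy
        rw [(hφderiv y hy).deriv]
        have hr' : r ≤ h y := hex y hy
        have hk := hkey y ⟨hy.1.le, hy.2⟩ hr'
        have : c * (y ^ 2)⁻¹ = c / y ^ 2 := by ring
        rw [this]
        have hy2 : (0:ℝ) < y ^ 2 := by nlinarith [hy.2]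
        have : -c / y ^ 2 + c / y ^ 2 = 0 := by ring
        linarith
    -- pick a point close to 0 to obtain a contradiction
    obtain ⟨L, hLdef⟩ : ∃ L : ℝ, L = max (h (-δ) + c / δ - r) 0 + 1 := ⟨_, rfl⟩
    have hLpos : 0 < L := by
      rw [hLdef]
      have := le_max_right (h (-δ) + c / δ - r) (0:ℝ)
      linarith
    obtain ⟨y₀, hy₀def⟩ : ∃ y₀ : ℝ, y₀ = -min (δ / 2) (c / L) := ⟨_, rfl⟩
    have hminpos : 0 < min (δ / 2) (c / L) :=
      lt_min (by linarith) (div_pos hcpos hLpos)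
    have hy₀neg : y₀ < 0 := by rw [hy₀def]; simpa using hminpos
    have hy₀gt : -δ < y₀ := by
      have : min (δ / 2) (c / L) ≤ δ / 2 := min_le_left _ _
      rw [hy₀def]
      linarith
    have hy₀Ico : y₀ ∈ Set.Ico (-δ) (0:ℝ) := ⟨hy₀gt.le, hy₀neg⟩
    have hδIco : (-δ) ∈ Set.Ico (-δ) (0:ℝ) := ⟨le_rfl, by linarith⟩
    have hmono := hφanti hδIco hy₀Ico hy₀gt.le
    have hδne : δ ≠ 0 := ne_of_gt hδpos
    have hφδ : φ (-δ) = h (-δ) + c / δ := by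
      simp only [hφdef]
      rw [inv_neg, mul_neg, sub_neg_eq_add, div_eq_mul_inv]
    have hrle : r ≤ h y₀ := hex y₀ ⟨hy₀gt, hy₀neg⟩
    -- c * y₀⁻¹ ≤ -L
    have hinv : c * y₀⁻¹ ≤ -L := by
      have h1 : (min (δ / 2) (c / L)) ≤ c / L := min_le_right _ _
      have h2 : L ≤ c / (min (δ / 2) (c / L)) := by
        rw [le_div_iff₀ hminpos]
        calc L * min (δ / 2) (c / L) ≤ L * (c / L) :=
              mul_le_mul_of_nonneg_left h1 hLpos.le
          _ = c := by field_simp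
      have h4 : y₀⁻¹ = -(min (δ / 2) (c / L))⁻¹ := by rw [hy₀def, inv_neg]
      rw [h4, mul_neg, neg_le_neg_iff]
      rwa [div_eq_mul_inv] at h2
    have : φ y₀ ≤ φ (-δ) := hmono
    rw [hφδ] at this
    simp only [hφdef] at this
    have hLbig : h (-δ) + c / δ - r ≤ L - 1 := by
      rw [hLdef]
      simp only [add_sub_cancel_right]
      exact le_max_left _ _
    linarith

/-- Every solution of `h'(y) = -h(y)/(A(y)y²) + B(y)` on `[-ε, 0)`, with `A, B` continuous and
`A(0) > 0`, converges to `0` as `y → 0-`. -/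
theorem stmt5 (ε : ℝ) (hε : 0 < ε) (A B : ℝ → ℝ)
    (hA : ContinuousOn A (Set.Icc (-ε) 0)) (hB : ContinuousOn B (Set.Icc (-ε) 0))
    (hA0 : 0 < A 0) (h : ℝ → ℝ)
    (hode : ∀ y ∈ Set.Ico (-ε) 0, HasDerivAt h (-(h y) / (A y * y ^ 2) + B y) y) :
    Tendsto h (nhdsWithin 0 (Set.Iio 0)) (nhds 0) := by
  -- global bounds for A and B
  obtain ⟨M₀, hM₀⟩ := (isCompact_Icc (a := -ε) (b := 0)).exists_bound_of_continuousOn hA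
  obtain ⟨C₀, hC₀⟩ := (isCompact_Icc (a := -ε) (b := 0)).exists_bound_of_continuousOn hB
  have h0mem : (0:ℝ) ∈ Set.Icc (-ε) 0 := ⟨by linarith, le_rfl⟩
  have hM₀0 : 0 ≤ M₀ := le_trans (norm_nonneg _) (hM₀ 0 h0mem)
  have hC₀0 : 0 ≤ C₀ := le_trans (norm_nonneg _) (hC₀ 0 h0mem)
  set M : ℝ := M₀ + 1 with hMdef
  have hMpos : 0 < M := by positivity
  -- neighborhood where A is positive
  have hA0' : Tendsto A (nhdsWithin 0 (Set.Icc (-ε) 0)) (nhds (A 0)) := hA 0 h0mem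
  have hev : ∀ᶠ y in nhdsWithin 0 (Set.Icc (-ε) 0), 0 < A y :=
    hA0'.eventually (eventually_gt_nhds hA0)
  rw [eventually_nhdsWithin_iff] at hev
  rw [Metric.eventually_nhds_iff] at hev
  obtain ⟨ε', hε'pos, hε'⟩ := hev
  set δ₀ : ℝ := min (ε' / 2) ε with hδ₀def
  have hδ₀pos : 0 < δ₀ := lt_min (by linarith) hε
  have hδ₀ε : δ₀ ≤ ε := min_le_right _ _
  have hsub : ∀ y ∈ Set.Icc (-δ₀) (0:ℝ), y ∈ Set.Icc (-ε) (0:ℝ) := by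
    intro y hy
    exact ⟨le_trans (neg_le_neg hδ₀ε) hy.1, hy.2⟩
  have hApos : ∀ y ∈ Set.Icc (-δ₀) (0:ℝ), 0 < A y ∧ A y ≤ M := by
    intro y hy
    constructor
    · apply hε'
      · rw [Real.dist_eq, sub_zero, abs_lt]
        have hh : δ₀ ≤ ε' / 2 := min_le_left _ _
        constructor
        · linarith [hy.1]
        · linarith [hy.2]
      · exact hsub y hy
    · have := hM₀ y (hsub y hy)
      rw [Real.norm_eq_abs] at this
      have := abs_le.mp this
      linarith [this.2]
  have hBle : ∀ y ∈ Set.Icc (-δ₀) (0:ℝ), B y ≤ C₀ := by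
    intro y hy
    have := hC₀ y (hsub y hy)
    rw [Real.norm_eq_abs] at this
    linarith [(abs_le.mp this).2]
  have hBle' : ∀ y ∈ Set.Icc (-δ₀) (0:ℝ), -B y ≤ C₀ := by
    intro y hy
    have := hC₀ y (hsub y hy)
    rw [Real.norm_eq_abs] at this
    linarith [(abs_le.mp this).1]
  have hode' : ∀ y ∈ Set.Ico (-ε) (0:ℝ),
      HasDerivAt (fun y => -h y) (-(-h y) / (A y * y ^ 2) + -B y) y := by
    intro y hy
    have := (hode y hy).neg
    exact this.congr_deriv (by ring)
  rw [NormedAddCommGroup.tendsto_nhds_zero]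
  intro r hr
  have h1 := stmt5_aux ε δ₀ M C₀ hδ₀pos hδ₀ε hMpos hC₀0 A B h hApos hBle hode r hr
  have h2 := stmt5_aux ε δ₀ M C₀ hδ₀pos hδ₀ε hMpos hC₀0 A (fun y => -B y) (fun y => -h y)
    hApos hBle' hode' r hr
  filter_upwards [h1, h2] with y hy1 hy2
  rw [Real.norm_eq_abs, abs_lt]
  constructor <;> linarith
end

section
/- Let 0 < p < 1, δ > 0, σ > 0, μ > 0, with G ≤ μ < A where G = sqrt(2δ(1-p)σ²/p) and A = δ/p+(1-p)σ²/2. Define a(k) = 2pδ(1+k), b(k) = (2δ + p(1-p)(2μ-σ²))k + 2p(1-p)μ, c(k) = (1-p)(2μ+(p²-1)σ²)k + (1-p)³σ². Then K = (1-p)(μ-G)/((A-μ)+p(μ-G)) is the smallest nonnegative solution of b(k)² = 4 a(k) c(k). -/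
/-- `K = (1-p)(μ-G)/((A-μ)+p(μ-G))` is the smallest nonnegative solution `k` of
`b(k)² = 4 a(k) c(k)` where `a(k) = 2pδ(1+k)`, `b(k) = (2δ + p(1-p)(2μ-σ²))k + 2p(1-p)μ`,
`c(k) = (1-p)(2μ+(p²-1)σ²)k + (1-p)³σ²`, for `0 < p < 1` and `G ≤ μ < A`. -/
theorem stmt8 (p δ σ μ G A K : ℝ) (a b c : ℝ → ℝ)
    (hp : 0 < p) (hp1 : p < 1) (hδ : 0 < δ) (hσ : 0 < σ) (hμ : 0 < μ)
    (hG : G = Real.sqrt (2 * δ * (1 - p) * σ ^ 2 / p))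
    (hA : A = δ / p + (1 - p) * σ ^ 2 / 2)
    (hGμ : G ≤ μ) (hμA : μ < A)
    (ha : ∀ k, a k = 2 * p * δ * (1 + k))
    (hb : ∀ k, b k = (2 * δ + p * (1 - p) * (2 * μ - σ ^ 2)) * k + 2 * p * (1 - p) * μ)
    (hc : ∀ k, c k = (1 - p) * (2 * μ + (p ^ 2 - 1) * σ ^ 2) * k + (1 - p) ^ 3 * σ ^ 2)
    (hK : K = (1 - p) * (μ - G) / ((A - μ) + p * (μ - G))) :
    0 ≤ K ∧ (b K) ^ 2 = 4 * a K * c K ∧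
      ∀ k : ℝ, 0 ≤ k → (b k) ^ 2 = 4 * a k * c k → K ≤ k := by
  have h1p : (0:ℝ) < 1 - p := by linarith
  have hG0 : 0 ≤ G := hG ▸ Real.sqrt_nonneg _
  have harg : 0 ≤ 2 * δ * (1 - p) * σ ^ 2 / p := by
    apply div_nonneg _ hp.le
    have := mul_pos (mul_pos (by linarith : (0:ℝ) < 2 * δ) h1p) (pow_pos hσ 2)
    linarith
  have hsq : G ^ 2 = 2 * δ * (1 - p) * σ ^ 2 / p := by
    rw [hG]; exact Real.sq_sqrt harg
  have hpG2 : p * G ^ 2 = 2 * δ * (1 - p) * σ ^ 2 := by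
    rw [hsq]; field_simp
  have h2pA : 2 * p * A = 2 * δ + p * (1 - p) * σ ^ 2 := by
    rw [hA]; field_simp
  set D : ℝ := (A - μ) + p * (μ - G) with hD
  set D₂ : ℝ := (A - μ) + p * (μ + G) with hD₂
  set N : ℝ := (1 - p) * (μ - G) with hN
  set N₂ : ℝ := (1 - p) * (μ + G) with hN₂
  have hDpos : 0 < D := by
    have : 0 ≤ p * (μ - G) := mul_nonneg hp.le (by linarith)
    have : 0 < A - μ := by linarith
    simp only [hD]; linarith [mul_nonneg hp.le (sub_nonneg.mpr hGμ)]
  have hD₂pos : 0 < D₂ := by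
    have h1 : 0 < A - μ := by linarith
    have h2 : 0 ≤ p * (μ + G) := mul_nonneg hp.le (by linarith)
    simp only [hD₂]; linarith
  have hNnn : 0 ≤ N := mul_nonneg h1p.le (by linarith)
  have hfact : ∀ k : ℝ, (b k) ^ 2 - 4 * a k * c k
      = 4 * p ^ 2 * (D * k - N) * (D₂ * k - N₂) := by
    intro k
    rw [ha, hb, hc]
    simp only [hD, hD₂, hN, hN₂]
    linear_combination (4 * p * (1 - p - p * k) ^ 2) * hpG2 -
      (2 * δ * k ^ 2 + 2 * p * k ^ 2 * A - 4 * p * μ * k - 4 * p * μ * k ^ 2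
        + p * σ ^ 2 * k ^ 2 + 4 * p ^ 2 * μ * k + 4 * p ^ 2 * μ * k ^ 2
        - p ^ 2 * σ ^ 2 * k ^ 2) * h2pA
  have hKND : K = N / D := by rw [hK]
  have hDK : D * K - N = 0 := by
    rw [hKND]; field_simp; ring
  refine ⟨by rw [hKND]; exact div_nonneg hNnn hDpos.le, ?_, ?_⟩
  · have := hfact K
    rw [hDK] at this
    nlinarith [this]
  · intro k hk0 hk
    have hroot : 4 * p ^ 2 * (D * k - N) * (D₂ * k - N₂) = 0 := by
      rw [← hfact k]; linarith
    have hp2 : (4 : ℝ) * p ^ 2 ≠ 0 := by positivity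
    rcases mul_eq_zero.mp hroot with h | h
    · rcases mul_eq_zero.mp h with h' | h'
      · exact absurd h' hp2
      · -- D * k = N, so k = K
        have : k = N / D := by field_simp; linarith
        rw [hKND, this]
    · -- D₂ * k = N₂, so k = N₂ / D₂ ≥ K
      have hk2 : k = N₂ / D₂ := by field_simp; linarith
      rw [hKND, hk2]
      rw [div_le_div_iff₀ hDpos hD₂pos]
      have key : N₂ * D - N * D₂ = 2 * (1 - p) * G * (A - μ) := by
        simp only [hD, hD₂, hN, hN₂]; ring
      have h2 : 0 ≤ 2 * (1 - p) * G * (A - μ) :=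
        mul_nonneg (mul_nonneg (mul_nonneg (by norm_num) h1p.le) hG0) (by linarith)
      linarith [key]
end

section
/- Under the hypotheses 0<p<1, δ,σ,μ>0, G ≤ μ < A (with G, A, a, b, c, K as defined), for every k ∈ [0, K] one has b(k)² - 4a(k)c(k) ≥ 0, b(k) - 4δk > 0, and (1-p)/p - k > 0. -/
set_option maxHeartbeats 1000000


/-- For `0 < p < 1`, `δ, σ, μ > 0` and `G ≤ μ < A`, one has, for every `k ∈ [0, K]`:
`b(k)² - 4a(k)c(k) ≥ 0`, `b(k) - 4δk > 0` and `(1-p)/p - k > 0`. -/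
theorem stmt9 (p δ σ μ G A K : ℝ) (a b c : ℝ → ℝ)
    (hp : 0 < p) (hp1 : p < 1) (hδ : 0 < δ) (hσ : 0 < σ) (hμ : 0 < μ)
    (hG : G = Real.sqrt (2 * δ * (1 - p) * σ ^ 2 / p))
    (hA : A = δ / p + (1 - p) * σ ^ 2 / 2)
    (hGμ : G ≤ μ) (hμA : μ < A)
    (ha : ∀ k, a k = 2 * p * δ * (1 + k))
    (hb : ∀ k, b k = (2 * δ + p * (1 - p) * (2 * μ - σ ^ 2)) * k + 2 * p * (1 - p) * μ)
    (hc : ∀ k, c k = (1 - p) * (2 * μ + (p ^ 2 - 1) * σ ^ 2) * k + (1 - p) ^ 3 * σ ^ 2)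
    (hK : K = (1 - p) * (μ - G) / ((A - μ) + p * (μ - G))) :
    ∀ k ∈ Set.Icc (0 : ℝ) K,
      0 ≤ (b k) ^ 2 - 4 * a k * c k ∧ 0 < b k - 4 * δ * k ∧ 0 < (1 - p) / p - k := by
  have hq : 0 < 1 - p := by linarith
  have hp0 : p ≠ 0 := ne_of_gt hp
  have hGpos : 0 < G := by
    rw [hG]
    exact Real.sqrt_pos.mpr (by positivity)
  have hG2' : G ^ 2 = 2 * (1 - p) * σ ^ 2 * A - (1 - p) ^ 2 * σ ^ 4 := by
    rw [hG, Real.sq_sqrt (by positivity), hA]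
    field_simp
    ring
  have hδ' : δ = p * A - p * (1 - p) * σ ^ 2 / 2 := by
    rw [hA]
    field_simp
    ring
  have hden : 0 < (A - μ) + p * (μ - G) := by
    have h1 : 0 ≤ p * (μ - G) := mul_nonneg hp.le (by linarith)
    linarith
  have hKden : K * ((A - μ) + p * (μ - G)) = (1 - p) * (μ - G) := by
    rw [hK]
    field_simp
  have h5 : (1 - p - p * K) * ((A - μ) + p * (μ - G)) = (1 - p) * (A - μ) := by
    linear_combination (-p) * hKden
  have hpK : p * K < 1 - p := by
    rcases lt_or_ge (p * K) (1 - p) with h | h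
    · exact h
    · exfalso
      have hle : (1 - p - p * K) * ((A - μ) + p * (μ - G)) ≤ 0 :=
        mul_nonpos_iff.mpr (Or.inr ⟨by linarith, hden.le⟩)
      nlinarith [mul_pos hq (show (0:ℝ) < A - μ by linarith)]
  intro k hk
  obtain ⟨hk0, hkK⟩ := hk
  have hdk : ((A - μ) + p * (μ - G)) * k ≤ (1 - p) * (μ - G) := by
    have := mul_le_mul_of_nonneg_left hkK hden.le
    linarith [hKden]
  refine ⟨?_, ?_, ?_⟩
  · -- discriminant nonneg
    have key : (1 - p) ^ 2 * σ ^ 4 * ((b k) ^ 2 - 4 * a k * c k)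
        = p ^ 2 * (2 * (1 - p) * σ ^ 2 * (((A - μ) + p * (μ - G)) * k - (1 - p) * (μ - G)))
          * (2 * (1 - p) * σ ^ 2 * ((((A - μ) + p * (μ - G)) + 2 * p * G) * k - (1 - p) * (μ + G))) := by
      rw [ha, hb, hc]
      linear_combination
        (4*p^2*σ^4 - 16*p^3*σ^4 - 8*p^3*σ^4*k + 24*p^4*σ^4 + 24*p^4*σ^4*k + 4*p^4*σ^4*k^2 - 16*p^5*σ^4 - 24*p^5*σ^4*k - 8*p^5*σ^4*k^2 + 4*p^6*σ^4 + 8*p^6*σ^4*k + 4*p^6*σ^4*k^2) * hG2'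
        + (4*σ^4*k^2*δ - 8*p*σ^4*k^2*δ + 4*p*σ^4*k^2*A - 8*p*σ^4*μ*k - 8*p*σ^4*μ*k^2 - 8*p*σ^6 + 2*p*σ^6*k^2 + 4*p^2*σ^4*k^2*δ - 8*p^2*σ^4*k^2*A + 24*p^2*σ^4*μ*k + 24*p^2*σ^4*μ*k^2 + 40*p^2*σ^6 + 16*p^2*σ^6*k - 6*p^2*σ^6*k^2 + 4*p^3*σ^4*k^2*A - 24*p^3*σ^4*μ*k - 24*p^3*σ^4*μ*k^2 - 80*p^3*σ^6 - 64*p^3*σ^6*k - 2*p^3*σ^6*k^2 + 8*p^4*σ^4*μ*k + 8*p^4*σ^4*μ*k^2 + 80*p^4*σ^6 + 96*p^4*σ^6*k + 22*p^4*σ^6*k^2 - 40*p^5*σ^6 - 64*p^5*σ^6*k - 24*p^5*σ^6*k^2 + 8*p^6*σ^6 + 16*p^6*σ^6*k + 8*p^6*σ^6*k^2) * hδ'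
    have h1 : ((A - μ) + p * (μ - G)) * k - (1 - p) * (μ - G) ≤ 0 := by linarith
    have h2 : (((A - μ) + p * (μ - G)) + 2 * p * G) * k - (1 - p) * (μ + G) ≤ 0 := by
      have e2 : 2 * G * (p * k) ≤ 2 * G * (p * K) :=
        mul_le_mul_of_nonneg_left (mul_le_mul_of_nonneg_left hkK hp.le)
          (by positivity)
      have e3 : 2 * G * (p * K) ≤ 2 * G * (1 - p) :=
        mul_le_mul_of_nonneg_left hpK.le (by positivity)
      linarith [hdk, e2, e3]
    have h12 : 0 ≤ (((A - μ) + p * (μ - G)) * k - (1 - p) * (μ - G))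
        * ((((A - μ) + p * (μ - G)) + 2 * p * G) * k - (1 - p) * (μ + G)) := by
      linarith [mul_nonneg (neg_nonneg.mpr h1) (neg_nonneg.mpr h2)]
    have h3 : 0 ≤ (1 - p) ^ 2 * σ ^ 4 * ((b k) ^ 2 - 4 * a k * c k) := by
      have h4 := mul_nonneg (show (0:ℝ) ≤ 4 * p ^ 2 * (1 - p) ^ 2 * σ ^ 4 by positivity) h12
      linarith [key, h4]
    have hpos : 0 < (1 - p) ^ 2 * σ ^ 4 := by positivity
    have h6 : (1 - p) ^ 2 * σ ^ 4 * 0 ≤ (1 - p) ^ 2 * σ ^ 4 * ((b k) ^ 2 - 4 * a k * c k) := by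
      linarith
    linarith [le_of_mul_le_mul_left h6 hpos]
  · -- b k - 4δk > 0
    rw [hb]
    rcases le_or_gt 0 (p * (1 - p) * (2 * μ - σ ^ 2) - 2 * δ) with hC | hC
    · have := mul_nonneg hC hk0
      have := mul_pos (mul_pos hp hq) hμ
      linarith
    · have hKpos : 0 < (p * (1 - p) * (2 * μ - σ ^ 2) - 2 * δ) * K + 2 * p * (1 - p) * μ := by
        have hprod : ((p * (1 - p) * (2 * μ - σ ^ 2) - 2 * δ) * K + 2 * p * (1 - p) * μ)
            * ((A - μ) + p * (μ - G)) = 2 * p * (1 - p) * (A - μ) * G := by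
          linear_combination
            (-2*δ + 2*p*μ - p*σ^2 - 2*p^2*μ + p^2*σ^2) * hKden
            + (2*G - 2*μ - 2*p*G + 2*p*μ) * hδ'
        have hrhs : 0 < 2 * p * (1 - p) * (A - μ) * G := by
          have : 0 < A - μ := by linarith
          positivity
        rcases lt_or_ge 0 ((p * (1 - p) * (2 * μ - σ ^ 2) - 2 * δ) * K + 2 * p * (1 - p) * μ) with h | h
        · exact h
        · exfalso
          have hle := mul_nonpos_iff.mpr (Or.inr ⟨h, hden.le⟩)
          linarith [hprod ▸ hle]
      have hmono := mul_nonneg (neg_nonneg.mpr hC.le) (sub_nonneg.mpr hkK)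
      linarith [hKpos, hmono]
  · -- (1-p)/p - k > 0
    have hKlt : K < (1 - p) / p := by
      rw [lt_div_iff₀ hp]
      linarith [hpK]
    linarith
end

section
/- In the frictional market model, for any consistent price process S̃ (an Itô process with (1-λ̲)S_t ≤ S̃_t ≤ (1+λ̄)S_t for all t a.s.), every consumption process financeable with transaction costs is financeable in the frictionless market with price S̃; that is, 𝒞 ⊆ 𝒞(S̃). -/
open MeasureTheory

/-- Proposition 2.1: every consumption process financeable under proportional transaction costs
(bid `(1-λ̲)S`, ask `(1+λ̄)S`) is financeable in the frictionless market whose price is any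
consistent price process `S̃` with `(1-λ̲)S ≤ S̃ ≤ (1+λ̄)S`.  Trading strategies are encoded by
their (pathwise) Hahn–Jordan decomposition `φ = η_S + φ↑ - φ↓`, where `φ↑, φ↓` are
right-continuous nondecreasing (Stieltjes) functions vanishing before time `0`; the
self-financing condition is the Stieltjes-integral identity of the paper, and admissibility is
nonnegativity of the liquidation value (resp. of the frictionless wealth `φ⁰ + φ S̃`). -/
theorem stmt13 {Ω : Type*} [MeasurableSpace Ω] (P : Measure Ω) [IsProbabilityMeasure P]
    (S Stilde : ℝ → Ω → ℝ) (lamBid lamAsk : ℝ)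
    (hlamBid : lamBid ∈ Set.Ioo (0:ℝ) 1) (hlamAsk : 0 < lamAsk)
    (hScont : ∀ ω, Continuous fun t => S t ω) (hSpos : ∀ t ω, 0 < S t ω)
    (hStildecont : ∀ ω, Continuous fun t => Stilde t ω)
    (hsandwich : ∀ t ω,
      (1 - lamBid) * S t ω ≤ Stilde t ω ∧ Stilde t ω ≤ (1 + lamAsk) * S t ω)
    (ηB ηS : ℝ) (c : ℝ → Ω → ℝ) (hc : ∀ t ω, 0 ≤ c t ω)
    -- `c` is financeable in the market with transaction costs:
    (hfrictional : ∃ (φ0 : ℝ → Ω → ℝ) (φup φdown : Ω → StieltjesFunction ℝ),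
      (∀ ω, ∀ x < (0:ℝ), φup ω x = 0 ∧ φdown ω x = 0) ∧
      -- self-financing: buy at the ask `(1+λ̄)S`, sell at the bid `(1-λ̲)S`
      (∀ ω, ∀ t, 0 ≤ t → φ0 t ω = ηB
        - (∫ u in Set.Icc 0 t, (1 + lamAsk) * S u ω ∂((φup ω).measure))
        + (∫ u in Set.Icc 0 t, (1 - lamBid) * S u ω ∂((φdown ω).measure))
        - ∫ u in (0:ℝ)..t, c u ω) ∧
      -- admissibility: nonnegative liquidation value
      (∀ ω, ∀ t, 0 ≤ t →
        0 ≤ φ0 t ω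
          + max (ηS + φup ω t - φdown ω t) 0 * ((1 - lamBid) * S t ω)
          - max (-(ηS + φup ω t - φdown ω t)) 0 * ((1 + lamAsk) * S t ω))) :
    -- then `c` is financeable in the frictionless market with price `S̃`:
    ∃ (φ0 : ℝ → Ω → ℝ) (φup φdown : Ω → StieltjesFunction ℝ),
      (∀ ω, ∀ x < (0:ℝ), φup ω x = 0 ∧ φdown ω x = 0) ∧
      -- frictionless self-financing: all trades at the price `S̃`
      (∀ ω, ∀ t, 0 ≤ t → φ0 t ω = ηB
        - (∫ u in Set.Icc 0 t, Stilde u ω ∂((φup ω).measure))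
        + (∫ u in Set.Icc 0 t, Stilde u ω ∂((φdown ω).measure))
        - ∫ u in (0:ℝ)..t, c u ω) ∧
      -- frictionless admissibility: nonnegative wealth `V_t = φ⁰_t + φ_t S̃_t`
      (∀ ω, ∀ t, 0 ≤ t →
        0 ≤ φ0 t ω + (ηS + φup ω t - φdown ω t) * Stilde t ω) := by
  obtain ⟨φ0, φup, φdown, hvanish, hsf, hadm⟩ := hfrictional
  refine ⟨fun t ω => ηB
      - (∫ u in Set.Icc 0 t, Stilde u ω ∂((φup ω).measure))
      + (∫ u in Set.Icc 0 t, Stilde u ω ∂((φdown ω).measure))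
      - ∫ u in (0:ℝ)..t, c u ω, φup, φdown, hvanish, fun ω t _ => rfl, ?_⟩
  intro ω t ht
  have hint : ∀ (g : ℝ → ℝ), Continuous g → ∀ (ψ : StieltjesFunction ℝ),
      IntegrableOn g (Set.Icc 0 t) ψ.measure := fun g hg ψ =>
    hg.continuousOn.integrableOn_compact isCompact_Icc
  -- integral comparisons
  have h1 : (∫ u in Set.Icc 0 t, Stilde u ω ∂((φup ω).measure))
      ≤ ∫ u in Set.Icc 0 t, (1 + lamAsk) * S u ω ∂((φup ω).measure) := by
    refine setIntegral_mono_on (hint _ (hStildecont ω) _)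
      (hint _ (by continuity) _) measurableSet_Icc ?_
    intro u _; exact (hsandwich u ω).2
  have h2 : (∫ u in Set.Icc 0 t, (1 - lamBid) * S u ω ∂((φdown ω).measure))
      ≤ ∫ u in Set.Icc 0 t, Stilde u ω ∂((φdown ω).measure) := by
    refine setIntegral_mono_on (hint _ (by continuity) _)
      (hint _ (hStildecont ω) _) measurableSet_Icc ?_
    intro u _; exact (hsandwich u ω).1
  have hφ0 : φ0 t ω ≤ ηB
      - (∫ u in Set.Icc 0 t, Stilde u ω ∂((φup ω).measure))
      + (∫ u in Set.Icc 0 t, Stilde u ω ∂((φdown ω).measure))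
      - ∫ u in (0:ℝ)..t, c u ω := by
    rw [hsf ω t ht]; linarith
  -- pointwise comparison of the position value
  set φ := ηS + φup ω t - φdown ω t with hφ
  have hval : max φ 0 * ((1 - lamBid) * S t ω)
      - max (-φ) 0 * ((1 + lamAsk) * S t ω) ≤ φ * Stilde t ω := by
    rcases le_or_gt 0 φ with h | h
    · rw [max_eq_left h, max_eq_right (by linarith)]
      have := (hsandwich t ω).1
      nlinarith
    · rw [max_eq_right h.le, max_eq_left (by linarith)]
      have := (hsandwich t ω).2
      nlinarith
  have := hadm ω t ht
  dsimp only
  linarith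
end

section
/- Let p ∈ (0,1), δ,σ,μ>0 with μ < G = sqrt(2δ(1-p)σ²/p). Define the curve T(x,z): P(x,z)=0 with P(x,z) = -2qδz² + 2p(μx+1)z - (1-p)²σ²x², q = p/(1-p), restricted to x>0. Then the set {x > 0 : ∃z, P(x,z) = 0 and z ≥ (1-p)/(2δ)} is bounded with supremum x_E = 1/(G-μ), and the maximal value of z over the curve is attained at x_N = 2μ/(G² - μ²). -/
set_option maxHeartbeats 1600000 in
/-- For `0 < p < 1` and `μ < G`, the upper half of the curve `𝕋 = {P = 0}` (an ellipse) has a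
bounded set of abscissas with supremum `x_E = 1/(G-μ)`, and the maximal `z`-value over the
curve is attained at the north pole abscissa `x_N = 2μ/(G² - μ²)`. -/
theorem stmt16 (p δ σ μ q G : ℝ) (Pf : ℝ → ℝ → ℝ)
    (hp : 0 < p) (hp1 : p < 1) (hδ : 0 < δ) (hσ : 0 < σ) (hμ : 0 < μ)
    (hq : q = p / (1 - p)) (hG : G = Real.sqrt (2 * δ * (1 - p) * σ ^ 2 / p))
    (hμG : μ < G)
    (hPf : ∀ x z, Pf x z = -2 * q * δ * z ^ 2 + 2 * p * (μ * x + 1) * z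
      - (1 - p) ^ 2 * σ ^ 2 * x ^ 2) :
    BddAbove {x : ℝ | 0 < x ∧ ∃ z, Pf x z = 0 ∧ (1 - p) / (2 * δ) ≤ z} ∧
    sSup {x : ℝ | 0 < x ∧ ∃ z, Pf x z = 0 ∧ (1 - p) / (2 * δ) ≤ z} = 1 / (G - μ) ∧
    ∃ zN, Pf (2 * μ / (G ^ 2 - μ ^ 2)) zN = 0 ∧
      ∀ x z, 0 < x → Pf x z = 0 → z ≤ zN := by
  have h1p : 0 < 1 - p := by linarith
  have hG0 : 0 < G := hμ.trans hμG
  have hGμ : 0 < G - μ := by linarith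
  have hq' : q * (1 - p) = p := by rw [hq]; field_simp
  have hG2 : G ^ 2 * p = 2 * δ * (1 - p) * σ ^ 2 := by
    rw [hG, Real.sq_sqrt (by positivity)]; field_simp
  have hσ2 : σ ^ 2 = p * G ^ 2 / (2 * δ * (1 - p)) := by
    field_simp; linarith [hG2]
  have hs : 0 < G ^ 2 - μ ^ 2 := by nlinarith
  have hAqδ : (1 - p) ^ 2 * σ ^ 2 * q * δ = p ^ 2 * G ^ 2 / 2 := by
    linear_combination ((1 - p) * σ ^ 2 * δ) * hq' - (p / 2) * hG2
  have hbound : ∀ x z, 0 < x → Pf x z = 0 → x ≤ 1 / (G - μ) := by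
    intro x z hx heq
    rw [hPf] at heq
    have hsq2 : (2 * q * δ * z - p * (μ * x + 1)) ^ 2
        = p ^ 2 * (μ * x + 1) ^ 2 - p ^ 2 * G ^ 2 * x ^ 2 := by
      linear_combination (-2 * q * δ) * heq - 2 * x ^ 2 * hAqδ
    have h9 : (G * x) ^ 2 ≤ (μ * x + 1) ^ 2 := by
      nlinarith [sq_nonneg (2 * q * δ * z - p * (μ * x + 1)), hsq2, mul_pos hp hp]
    have hpos : 0 < G * x + (μ * x + 1) := by positivity
    have h10 : G * x ≤ μ * x + 1 := by nlinarith [h9, hpos]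
    rw [le_div_iff₀ hGμ]
    linarith [h10]
  have hub : ∀ x ∈ {x : ℝ | 0 < x ∧ ∃ z, Pf x z = 0 ∧ (1 - p) / (2 * δ) ≤ z},
      x ≤ 1 / (G - μ) := by
    rintro x ⟨hx0, z, hz0, -⟩
    exact hbound x z hx0 hz0
  have hmem : 1 / (G - μ) ∈ {x : ℝ | 0 < x ∧ ∃ z, Pf x z = 0 ∧ (1 - p) / (2 * δ) ≤ z} := by
    refine ⟨by positivity, (1 - p) * G / (2 * δ * (G - μ)), ?_, ?_⟩
    · rw [hPf, hq, hσ2]; field_simp; ring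
    · rw [div_le_div_iff₀ (by positivity) (by positivity)]
      nlinarith [mul_pos (mul_pos h1p hδ) hμ]
  refine ⟨⟨1 / (G - μ), hub⟩, le_antisymm (csSup_le ⟨_, hmem⟩ hub)
    (le_csSup ⟨1 / (G - μ), hub⟩ hmem), (1 - p) * G ^ 2 / (δ * (G ^ 2 - μ ^ 2)), ?_, ?_⟩
  · rw [hPf, hq, hσ2]; field_simp; ring
  · intro x z hx heq
    rw [hPf] at heq
    have hzN : 0 < (1 - p) * G ^ 2 / (δ * (G ^ 2 - μ ^ 2)) := by positivity
    rcases le_or_gt z 0 with hz | hz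
    · linarith
    · have hsq2 : (2 * (1 - p) ^ 2 * σ ^ 2 * x - 2 * p * μ * z) ^ 2
          = 4 * p ^ 2 * μ ^ 2 * z ^ 2 - 4 * p ^ 2 * G ^ 2 * z ^ 2
            + 8 * p * (1 - p) ^ 2 * σ ^ 2 * z := by
        linear_combination (-4 * (1 - p) ^ 2 * σ ^ 2) * heq - 8 * z ^ 2 * hAqδ
      have h5 : 4 * p ^ 2 * (G ^ 2 - μ ^ 2) * z ^ 2 ≤ 8 * p * (1 - p) ^ 2 * σ ^ 2 * z := by
        nlinarith [sq_nonneg (2 * (1 - p) ^ 2 * σ ^ 2 * x - 2 * p * μ * z), hsq2]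
      have h6 : (4 * p ^ 2 * (G ^ 2 - μ ^ 2) * z) * z ≤ (8 * p * (1 - p) ^ 2 * σ ^ 2) * z := by
        nlinarith [h5]
      have h7 : 4 * p ^ 2 * (G ^ 2 - μ ^ 2) * z ≤ 8 * p * (1 - p) ^ 2 * σ ^ 2 :=
        le_of_mul_le_mul_right h6 hz
      rw [le_div_iff₀ (by positivity)]
      have hG2' : p ^ 2 * G ^ 2 * (1 - p) = 2 * p * δ * (1 - p) ^ 2 * σ ^ 2 := by
        linear_combination (p * (1 - p)) * hG2
      have h8 : (z * (δ * (G ^ 2 - μ ^ 2))) * (4 * p ^ 2) ≤ ((1 - p) * G ^ 2) * (4 * p ^ 2) := by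
        nlinarith [mul_le_mul_of_nonneg_left h7 hδ.le, hG2']
      exact le_of_mul_le_mul_right h8 (by positivity)
end
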